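/- For every integer n ≥ 2, the ℓ¹-spectral distance σ(nK_1, H) ≥ 2 for every graph H on n vertices not isomorphic to nK_1, with equality if and only if H ≅ K_2 + (n-2)K_1. -/

import Mathlib

open SimpleGraph Finset

/-- Adjacency matrix over `ℝ` (classical decidability). -/
noncomputable def adjMatR {n : ℕ} (G : SimpleGraph (Fin n)) : Matrix (Fin n) (Fin n) ℝ :=
  @SimpleGraph.adjMatrix ℝ (Fin n) G (Classical.decRel _) _ _

lemma adjMatR_isHermitian {n : ℕ} (G : SimpleGraph (Fin n)) : (adjMatR G).IsHermitian := by
  have h : (adjMatR G).IsSymm := @SimpleGraph.isSymm_adjMatrix ℝ (Fin n) G (Classical.decRel _) _ _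
  exact Matrix.isHermitian_iff_isSymm.mpr h

/-- Multiset of adjacency eigenvalues (with multiplicity). -/
noncomputable def specMS {n : ℕ} (G : SimpleGraph (Fin n)) : Multiset ℝ :=
  Finset.univ.val.map (adjMatR_isHermitian G).eigenvalues

/-- `i`-th largest adjacency eigenvalue (0-indexed). -/
noncomputable def eigval {n : ℕ} (G : SimpleGraph (Fin n)) (i : ℕ) : ℝ :=
  ((specMS G).sort (· ≥ ·)).getD i 0

/-- Graph energy. -/
noncomputable def energy {n : ℕ} (G : SimpleGraph (Fin n)) : ℝ :=
  ((specMS G).map (fun x => |x|)).sum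

/-- ℓ¹ spectral distance. -/
noncomputable def specDist {n : ℕ} (G H : SimpleGraph (Fin n)) : ℝ :=
  ∑ i ∈ Finset.range n, |eigval G i - eigval H i|

/-- number of edges -/
noncomputable def numEdges {n : ℕ} (G : SimpleGraph (Fin n)) : ℕ := G.edgeSet.ncard

/-- `K_2 + (n-2)K_1`: one edge plus isolated vertices. -/
def oneEdgeG (n : ℕ) : SimpleGraph (Fin n) :=
  SimpleGraph.fromRel (fun u v => (u : ℕ) = 0 ∧ (v : ℕ) = 1)

/-- `P_3 + (n-3)K_1`: a path on 3 vertices plus isolated vertices. -/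
def path3G (n : ℕ) : SimpleGraph (Fin n) :=
  SimpleGraph.fromRel (fun u v => ((u : ℕ) = 0 ∧ (v : ℕ) = 1) ∨ ((u : ℕ) = 1 ∧ (v : ℕ) = 2))

/-- Complete bipartite graph `K_{a,b}` on `Fin (a+b)`. -/
def compBip (a b : ℕ) : SimpleGraph (Fin (a + b)) :=
  SimpleGraph.fromRel (fun u v => (u : ℕ) < a ∧ a ≤ (v : ℕ))

/-- `K_{r,s} + tK_1`: complete bipartite plus `t` isolated vertices. -/
def compBipPlus (r s t : ℕ) : SimpleGraph (Fin (r + s + t)) :=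
  SimpleGraph.fromRel (fun u v => (u : ℕ) < r ∧ r ≤ (v : ℕ) ∧ (v : ℕ) < r + s)

/-- `K_1 + K_{n-1}`: an isolated vertex plus a complete graph. -/
def k1PlusComplete (n : ℕ) : SimpleGraph (Fin n) :=
  SimpleGraph.fromRel (fun u v => (u : ℕ) ≠ 0 ∧ (v : ℕ) ≠ 0)

/-- `(K_1 + K_2) ∇ (n-3)K_1`: join of `K_1 + K_2` with `n-3` isolated vertices. -/
def k1k2JoinEmpty (n : ℕ) : SimpleGraph (Fin n) :=
  SimpleGraph.fromRel (fun u v =>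
    ((u : ℕ) = 1 ∧ (v : ℕ) = 2) ∨ ((u : ℕ) < 3 ∧ 3 ≤ (v : ℕ)))

/-! ### Auxiliary lemmas -/

lemma adjMatR_apply_pos {n : ℕ} {G : SimpleGraph (Fin n)} {x y : Fin n} (h : G.Adj x y) :
    adjMatR G x y = 1 := by
  unfold adjMatR
  rw [@SimpleGraph.adjMatrix_apply ℝ (Fin n) G (Classical.decRel _), if_pos h]

lemma adjMatR_apply_neg {n : ℕ} {G : SimpleGraph (Fin n)} {x y : Fin n} (h : ¬ G.Adj x y) :
    adjMatR G x y = 0 := by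
  unfold adjMatR
  rw [@SimpleGraph.adjMatrix_apply ℝ (Fin n) G (Classical.decRel _), if_neg h]

lemma myConjPow {n : ℕ} (U D : Matrix (Fin n) (Fin n) ℝ) (hU : star U * U = 1)
    (hU' : U * star U = 1) (k : ℕ) :
    (U * D * star U) ^ k = U * D ^ k * star U := by
  induction k with
  | zero => simp [pow_zero, mul_one, hU']
  | succ k ih =>
      rw [pow_succ, pow_succ, ih]
      calc U * D ^ k * star U * (U * D * star U)
          = U * D ^ k * (star U * U) * D * star U := by noncomm_ring
        _ = U * (D ^ k * D) * star U := by rw [hU]; noncomm_ring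

lemma trace_pow_eq {n : ℕ} {A : Matrix (Fin n) (Fin n) ℝ} (hA : A.IsHermitian) (k : ℕ) :
    (A ^ k).trace = ∑ i, hA.eigenvalues i ^ k := by
  nth_rewrite 1 [hA.spectral_theorem]
  rw [Unitary.conjStarAlgAut_apply, myConjPow _ _ (Unitary.coe_star_mul_self hA.eigenvectorUnitary)
    (Unitary.coe_mul_star_self hA.eigenvectorUnitary), Matrix.trace_mul_cycle,
    Unitary.coe_star_mul_self, one_mul, Matrix.diagonal_pow, Matrix.trace_diagonal]
  simp [Function.comp]

lemma trace_adjMatR {n : ℕ} (G : SimpleGraph (Fin n)) : (adjMatR G).trace = 0 := by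
  unfold adjMatR
  exact @SimpleGraph.trace_adjMatrix ℝ (Fin n) G (Classical.decRel _) _ _ _

lemma sum_eig_zero {n : ℕ} (G : SimpleGraph (Fin n)) :
    ∑ i, (adjMatR_isHermitian G).eigenvalues i = 0 := by
  have h := trace_pow_eq (adjMatR_isHermitian G) 1
  simp only [pow_one] at h
  rw [← h, trace_adjMatR]

open scoped Classical in
lemma trace_sq_eq_card {n : ℕ} (G : SimpleGraph (Fin n)) :
    (adjMatR G ^ 2).trace
      = ((Finset.univ.filter fun p : Fin n × Fin n => G.Adj p.1 p.2).card : ℝ) := by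
  rw [pow_two, Matrix.trace]
  have h : ∀ i : Fin n, (adjMatR G * adjMatR G).diag i
      = ∑ j, if G.Adj i j then (1:ℝ) else 0 := by
    intro i
    rw [Matrix.diag_apply, Matrix.mul_apply]
    refine Finset.sum_congr rfl fun j _ => ?_
    by_cases h : G.Adj i j
    · rw [adjMatR_apply_pos h, adjMatR_apply_pos h.symm, if_pos h, one_mul]
    · rw [adjMatR_apply_neg h, zero_mul, if_neg h]
  simp only [h]
  rw [← Finset.sum_product', Finset.sum_boole]
  congr 1

lemma energy_sq_ge {n : ℕ} (e : Fin n → ℝ) (h0 : ∑ i, e i = 0) :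
    2 * ∑ i, (e i)^2 ≤ (∑ i, |e i|)^2 := by
  set P := ∑ i, max (e i) 0 with hP
  set N := ∑ i, max (-e i) 0 with hN
  have hPN : P - N = 0 := by
    have h1 : ∀ i : Fin n, max (e i) 0 - max (-e i) 0 = e i := by
      intro i
      rcases le_total 0 (e i) with h | h
      · rw [max_eq_left h, max_eq_right (by linarith), sub_zero]
      · rw [max_eq_right h, max_eq_left (by linarith)]; ring
    rw [hP, hN, ← Finset.sum_sub_distrib]
    simp only [h1]
    exact h0
  have habs : ∑ i, |e i| = P + N := by
    rw [hP, hN, ← Finset.sum_add_distrib]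
    refine Finset.sum_congr rfl fun i _ => ?_
    rcases le_total 0 (e i) with h | h
    · rw [abs_of_nonneg h, max_eq_left h, max_eq_right (by linarith), add_zero]
    · rw [abs_of_nonpos h, max_eq_right h, max_eq_left (by linarith), zero_add]
  have hsq : ∑ i, (e i)^2 = ∑ i, (max (e i) 0)^2 + ∑ i, (max (-e i) 0)^2 := by
    rw [← Finset.sum_add_distrib]
    refine Finset.sum_congr rfl fun i _ => ?_
    rcases le_total 0 (e i) with h | h
    · rw [max_eq_left h, max_eq_right (by linarith)]; ring
    · rw [max_eq_right h, max_eq_left (by linarith)]; ring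
  have h1 : ∑ i, (max (e i) 0)^2 ≤ P^2 :=
    Finset.sum_sq_le_sq_sum_of_nonneg fun i _ => le_max_right _ _
  have h2 : ∑ i, (max (-e i) 0)^2 ≤ N^2 :=
    Finset.sum_sq_le_sq_sum_of_nonneg fun i _ => le_max_right _ _
  have hPeqN : P = N := by linarith
  rw [habs, hsq]
  nlinarith [h1, h2]

lemma list_getD_zero_of_all_zero : ∀ (l : List ℝ) (i : ℕ), (∀ x ∈ l, x = 0) → l.getD i 0 = 0
  | [], i, _ => by simp
  | a :: t, 0, h => h a (by simp)
  | a :: t, i+1, h => by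
      simpa using list_getD_zero_of_all_zero t i fun x hx => h x (by simp [hx])

lemma sum_range_getD (l : List ℝ) (f : ℝ → ℝ) :
    ∑ i ∈ Finset.range l.length, f (l.getD i 0) = (l.map f).sum := by
  induction l with
  | nil => simp
  | cons a t ih =>
      rw [List.length_cons, Finset.sum_range_succ']
      simp only [List.getD_cons_succ, List.getD_cons_zero, ih, List.map_cons, List.sum_cons]
      ring

lemma adjMatR_bot {n : ℕ} : adjMatR (⊥ : SimpleGraph (Fin n)) = 0 := by
  ext x y
  rw [adjMatR_apply_neg (by simp), Matrix.zero_apply]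

lemma eig_bot {n : ℕ} (i : Fin n) :
    (adjMatR_isHermitian (⊥ : SimpleGraph (Fin n))).eigenvalues i = 0 := by
  have h := trace_pow_eq (adjMatR_isHermitian (⊥ : SimpleGraph (Fin n))) 2
  have h2 : ((adjMatR (⊥ : SimpleGraph (Fin n))) ^ 2).trace = 0 := by
    rw [adjMatR_bot]; simp
  rw [h2] at h
  have h3 := (Finset.sum_eq_zero_iff_of_nonneg
    (fun j (_ : j ∈ Finset.univ) => sq_nonneg
      ((adjMatR_isHermitian (⊥ : SimpleGraph (Fin n))).eigenvalues j))).mp h.symm i (by simp)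
  exact pow_eq_zero_iff (by norm_num) |>.mp h3

lemma eigval_bot {n : ℕ} (i : ℕ) : eigval (⊥ : SimpleGraph (Fin n)) i = 0 := by
  unfold eigval
  apply list_getD_zero_of_all_zero
  intro x hx
  rw [Multiset.mem_sort] at hx
  unfold specMS at hx
  obtain ⟨j, _, rfl⟩ := Multiset.mem_map.mp hx
  exact eig_bot j

lemma specDist_bot {n : ℕ} (H : SimpleGraph (Fin n)) :
    specDist (⊥ : SimpleGraph (Fin n)) H = ∑ i, |(adjMatR_isHermitian H).eigenvalues i| := by
  unfold specDist
  have hlen : ((specMS H).sort (· ≥ ·)).length = n := by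
    rw [Multiset.length_sort]
    unfold specMS
    rw [Multiset.card_map]
    exact Finset.card_univ.trans (Fintype.card_fin n)
  calc ∑ i ∈ Finset.range n, |eigval (⊥ : SimpleGraph (Fin n)) i - eigval H i|
      = ∑ i ∈ Finset.range ((specMS H).sort (· ≥ ·)).length,
          |((specMS H).sort (· ≥ ·)).getD i 0| := by
        rw [hlen]
        exact Finset.sum_congr rfl fun i _ => by
          rw [eigval_bot, zero_sub, abs_neg]; rfl
    _ = (((specMS H).sort (· ≥ ·)).map fun x => |x|).sum := sum_range_getD _ _
    _ = ((specMS H).map fun x => |x|).sum := by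
        rw [← Multiset.sum_coe, ← Multiset.map_coe, Multiset.sort_eq]
    _ = ∑ i, |(adjMatR_isHermitian H).eigenvalues i| := by
        unfold specMS
        rw [Multiset.map_map]
        rfl

lemma energy_one_edge {n : ℕ} {H : SimpleGraph (Fin n)} {u v : Fin n} (huv : u ≠ v)
    (hadj : ∀ x y, H.Adj x y ↔ (x = u ∧ y = v) ∨ (x = v ∧ y = u)) :
    ∑ i, |(adjMatR_isHermitian H).eigenvalues i| = 2 := by
  set e := (adjMatR_isHermitian H).eigenvalues with he
  have hA : adjMatR H = Matrix.single u v (1:ℝ) + Matrix.single v u 1 := by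
    ext x y
    rw [Matrix.add_apply]
    by_cases h : H.Adj x y
    · rcases (hadj x y).mp h with ⟨rfl, rfl⟩ | ⟨rfl, rfl⟩
      · rw [adjMatR_apply_pos h]
        simp [Matrix.single, huv, huv.symm]
      · rw [adjMatR_apply_pos h]
        simp [Matrix.single, huv, huv.symm]
    · rw [adjMatR_apply_neg h]
      have h1 : ¬ (u = x ∧ v = y) := fun ⟨hx, hy⟩ =>
        h ((hadj x y).mpr (Or.inl ⟨hx.symm, hy.symm⟩))
      have h2 : ¬ (v = x ∧ u = y) := fun ⟨hx, hy⟩ =>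
        h ((hadj x y).mpr (Or.inr ⟨hx.symm, hy.symm⟩))
      simp [Matrix.single, h1, h2]
  have hA2 : adjMatR H ^ 2 = Matrix.single u u (1:ℝ) + Matrix.single v v 1 := by
    rw [hA, pow_two, add_mul, mul_add, mul_add,
      Matrix.single_mul_single_of_ne (c := (1:ℝ)) u v u huv.symm, Matrix.single_mul_single_same,
      Matrix.single_mul_single_same, Matrix.single_mul_single_of_ne (c := (1:ℝ)) v u v huv]
    simp
  have hA3 : adjMatR H ^ 3 = adjMatR H := by
    rw [pow_succ, hA2, hA, add_mul, mul_add, mul_add,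
      Matrix.single_mul_single_same, Matrix.single_mul_single_of_ne (c := (1:ℝ)) u u v huv,
      Matrix.single_mul_single_of_ne (c := (1:ℝ)) v v u huv.symm, Matrix.single_mul_single_same]
    simp
  have hA4 : adjMatR H ^ 4 = adjMatR H ^ 2 := by
    have h43 : adjMatR H ^ 4 = adjMatR H ^ 3 * adjMatR H := pow_succ _ 3
    rw [h43, hA3, ← pow_two]
  have hA6 : adjMatR H ^ 6 = adjMatR H ^ 2 := by
    have h63 : adjMatR H ^ 6 = (adjMatR H ^ 3) ^ 2 := pow_mul _ 3 2
    rw [h63, hA3]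
  have htr2 : (adjMatR H ^ 2).trace = 2 := by
    rw [hA2, Matrix.trace_add, Matrix.trace_single_eq_same, Matrix.trace_single_eq_same]
    norm_num
  have hm2 : ∑ i, e i ^ 2 = 2 := by rw [← trace_pow_eq, htr2]
  have hm4 : ∑ i, e i ^ 4 = 2 := by rw [← trace_pow_eq, hA4, htr2]
  have hm6 : ∑ i, e i ^ 6 = 2 := by rw [← trace_pow_eq, hA6, htr2]
  have hzero : ∑ i, e i ^ 2 * (e i ^ 2 - 1) ^ 2 = 0 := by
    have : ∀ i : Fin n, e i ^ 2 * (e i ^ 2 - 1) ^ 2 = e i ^ 6 - 2 * e i ^ 4 + e i ^ 2 := by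
      intro i; ring
    simp only [this]
    rw [Finset.sum_add_distrib, Finset.sum_sub_distrib, ← Finset.mul_sum, hm2, hm4, hm6]
    ring
  have heach : ∀ i : Fin n, |e i| = e i ^ 2 := by
    intro i
    have h0 := (Finset.sum_eq_zero_iff_of_nonneg
      (fun j (_ : j ∈ Finset.univ) =>
        mul_nonneg (sq_nonneg (e j)) (sq_nonneg (e j ^ 2 - 1)))).mp hzero i (by simp)
    rcases mul_eq_zero.mp h0 with h | h
    · have : e i = 0 := by
        have := pow_eq_zero_iff (n := 2) (by norm_num) |>.mp h
        exact this
      rw [this]; norm_num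
    · have h1 : e i ^ 2 = 1 := by
        have := pow_eq_zero_iff (n := 2) (by norm_num) |>.mp h
        linarith
      rw [h1]
      have : |e i| ^ 2 = 1 := by rw [sq_abs]; exact h1
      nlinarith [abs_nonneg (e i)]
  calc ∑ i, |e i| = ∑ i, e i ^ 2 := Finset.sum_congr rfl fun i _ => heach i
    _ = 2 := hm2

lemma oneEdge_adj {n : ℕ} (hn : 2 ≤ n) (a b : Fin n) :
    (oneEdgeG n).Adj a b ↔ a ≠ b ∧
      ((a = ⟨0, by omega⟩ ∧ b = ⟨1, by omega⟩) ∨ (b = ⟨0, by omega⟩ ∧ a = ⟨1, by omega⟩)) := by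
  unfold oneEdgeG
  rw [SimpleGraph.fromRel_adj]
  simp [Fin.ext_iff]

lemma iso_of_structure {n : ℕ} (hn : 2 ≤ n) (H : SimpleGraph (Fin n)) (u v : Fin n)
    (huv : u ≠ v)
    (hadj : ∀ x y, H.Adj x y ↔ (x = u ∧ y = v) ∨ (x = v ∧ y = u)) :
    Nonempty (H ≃g oneEdgeG n) := by
  set z0 : Fin n := ⟨0, by omega⟩ with hz0
  set z1 : Fin n := ⟨1, by omega⟩ with hz1
  have hz : z0 ≠ z1 := by simp [hz0, hz1, Fin.ext_iff]
  set σ : Equiv.Perm (Fin n) :=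
    (Equiv.swap u z0).trans (Equiv.swap ((Equiv.swap u z0) v) z1) with hσ
  have hvne : (Equiv.swap u z0) v ≠ z0 := fun h =>
    huv ((Equiv.swap u z0).injective (h.trans (Equiv.swap_apply_left u z0).symm)).symm
  have hσu : σ u = z0 := by
    rw [hσ, Equiv.trans_apply, Equiv.swap_apply_left,
      Equiv.swap_apply_of_ne_of_ne hvne.symm hz]
  have hσv : σ v = z1 := by
    rw [hσ, Equiv.trans_apply, Equiv.swap_apply_left]
  refine ⟨⟨σ, ?_⟩⟩
  intro x y
  rw [oneEdge_adj hn, hadj]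
  have e0 : ∀ w : Fin n, σ w = z0 ↔ w = u := by
    intro w; rw [← hσu]; exact ⟨fun h => σ.injective h, fun h => by rw [h]⟩
  have e1 : ∀ w : Fin n, σ w = z1 ↔ w = v := by
    intro w; rw [← hσv]; exact ⟨fun h => σ.injective h, fun h => by rw [h]⟩
  constructor
  · rintro ⟨hne, (⟨h1, h2⟩ | ⟨h1, h2⟩)⟩
    · exact Or.inl ⟨(e0 x).mp h1, (e1 y).mp h2⟩
    · exact Or.inr ⟨(e1 x).mp h2, (e0 y).mp h1⟩
  · rintro (⟨rfl, rfl⟩ | ⟨rfl, rfl⟩)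
    · exact ⟨fun h => huv (σ.injective h), Or.inl ⟨hσu, hσv⟩⟩
    · exact ⟨fun h => huv (σ.injective h).symm, Or.inr ⟨hσu, hσv⟩⟩

lemma structure_of_iso {n : ℕ} (hn : 2 ≤ n) (H : SimpleGraph (Fin n)) (f : H ≃g oneEdgeG n) :
    ∃ u v : Fin n, u ≠ v ∧ ∀ x y, H.Adj x y ↔ (x = u ∧ y = v) ∨ (x = v ∧ y = u) := by
  set z0 : Fin n := ⟨0, by omega⟩ with hz0
  set z1 : Fin n := ⟨1, by omega⟩ with hz1
  have hz : z0 ≠ z1 := by simp [hz0, hz1, Fin.ext_iff]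
  refine ⟨f.symm z0, f.symm z1, fun h => hz (f.symm.injective h), fun x y => ?_⟩
  rw [← f.map_adj_iff, oneEdge_adj hn]
  have e0 : ∀ w : Fin n, f w = z0 ↔ w = f.symm z0 := by
    intro w
    constructor
    · intro h; rw [← h]; exact (f.toEquiv.symm_apply_apply w).symm
    · intro h; rw [h]; exact f.toEquiv.apply_symm_apply z0
  have e1 : ∀ w : Fin n, f w = z1 ↔ w = f.symm z1 := by
    intro w
    constructor
    · intro h; rw [← h]; exact (f.toEquiv.symm_apply_apply w).symm
    · intro h; rw [h]; exact f.toEquiv.apply_symm_apply z1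
  constructor
  · rintro ⟨hne, (⟨h1, h2⟩ | ⟨h1, h2⟩)⟩
    · exact Or.inl ⟨(e0 x).mp h1, (e1 y).mp h2⟩
    · exact Or.inr ⟨(e1 x).mp h2, (e0 y).mp h1⟩
  · rintro (⟨rfl, rfl⟩ | ⟨rfl, rfl⟩)
    · refine ⟨fun h => hz (f.symm.injective (f.injective h)), ?_⟩
      exact Or.inl ⟨(e0 _).mpr rfl, (e1 _).mpr rfl⟩
    · refine ⟨fun h => hz (f.symm.injective (f.injective h)).symm, ?_⟩
      exact Or.inr ⟨(e0 _).mpr rfl, (e1 _).mpr rfl⟩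

theorem cs_empty_graph (n : ℕ) (hn : 2 ≤ n) (H : SimpleGraph (Fin n))
    (hH : ¬ Nonempty (H ≃g (⊥ : SimpleGraph (Fin n)))) :
    2 ≤ specDist (⊥ : SimpleGraph (Fin n)) H ∧
      (specDist (⊥ : SimpleGraph (Fin n)) H = 2 ↔ Nonempty (H ≃g oneEdgeG n)) := by
  classical
  have hne : H ≠ ⊥ := by rintro rfl; exact hH ⟨SimpleGraph.Iso.refl⟩
  obtain ⟨u, v, huvadj⟩ : ∃ u v : Fin n, H.Adj u v := by
    by_contra h
    push_neg at h
    apply hne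
    ext x y
    simp only [SimpleGraph.bot_adj, iff_false]
    exact h x y
  have huv : u ≠ v := H.ne_of_adj huvadj
  set e := (adjMatR_isHermitian H).eigenvalues with he
  set S := (Finset.univ.filter fun p : Fin n × Fin n => H.Adj p.1 p.2) with hS
  have htr : ∑ i, e i ^ 2 = (S.card : ℝ) := by
    rw [← trace_pow_eq, trace_sq_eq_card]
  have hpairsub : ({(u, v), (v, u)} : Finset (Fin n × Fin n)) ⊆ S := by
    intro p hp
    rw [Finset.mem_insert, Finset.mem_singleton] at hp
    rw [hS, Finset.mem_filter]
    rcases hp with rfl | rfl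
    · exact ⟨Finset.mem_univ _, huvadj⟩
    · exact ⟨Finset.mem_univ _, huvadj.symm⟩
  have hpaircard : ({(u, v), (v, u)} : Finset (Fin n × Fin n)).card = 2 := by
    have hne2 : ((u, v) : Fin n × Fin n) ≠ (v, u) := fun h => huv (congrArg Prod.fst h)
    rw [Finset.card_insert_of_notMem (by simpa using hne2), Finset.card_singleton]
  have hScard : 2 ≤ S.card := hpaircard ▸ Finset.card_le_card hpairsub
  have hsum0 : ∑ i, e i = 0 := sum_eig_zero H
  have hkey : 2 * ∑ i, e i ^ 2 ≤ (∑ i, |e i|) ^ 2 := energy_sq_ge e hsum0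
  have hEnn : 0 ≤ ∑ i, |e i| := Finset.sum_nonneg fun i _ => abs_nonneg _
  have hE := specDist_bot H
  have hlow : 2 ≤ ∑ i, |e i| := by
    have h4 : (4 : ℝ) ≤ (∑ i, |e i|) ^ 2 := by
      have : (2 : ℝ) ≤ (S.card : ℝ) := by exact_mod_cast hScard
      nlinarith [htr]
    nlinarith [hEnn]
  refine ⟨by rw [hE]; exact hlow, ?_, ?_⟩
  · -- equality → iso
    intro heq
    rw [hE] at heq
    have hcardle : (S.card : ℝ) ≤ 2 := by nlinarith [htr, hkey, heq]
    have hcard2 : S.card = 2 := le_antisymm (by exact_mod_cast hcardle) hScard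
    have hSeq : S = ({(u, v), (v, u)} : Finset (Fin n × Fin n)) :=
      (Finset.eq_of_subset_of_card_le hpairsub (by rw [hpaircard, hcard2])).symm
    apply iso_of_structure hn H u v huv
    intro x y
    constructor
    · intro hxy
      have : (x, y) ∈ S := by rw [hS, Finset.mem_filter]; exact ⟨Finset.mem_univ _, hxy⟩
      rw [hSeq, Finset.mem_insert, Finset.mem_singleton] at this
      rcases this with h | h
      · exact Or.inl ⟨congrArg Prod.fst h, congrArg Prod.snd h⟩
      · exact Or.inr ⟨congrArg Prod.fst h, congrArg Prod.snd h⟩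
    · rintro (⟨rfl, rfl⟩ | ⟨rfl, rfl⟩)
      · exact huvadj
      · exact huvadj.symm
  · -- iso → equality
    rintro ⟨f⟩
    obtain ⟨a, b, hab, hadj⟩ := structure_of_iso hn H f
    rw [hE]
    exact energy_one_edge hab hadj
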